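/- Define $g_m(x) = \frac{4}{\pi} \sum_{r=0}^{m} \frac{\sin((2r+1)x)}{2r+1}$. Then for every integer $m > 12$ and every real $x$ with $|x| \le \pi/4$, $|g_m(x)| \le 1.9$. -/

import Mathlib

open Finset

noncomputable def g (m : ℕ) (x : ℝ) : ℝ :=
  (4 / Real.pi) * ∑ r ∈ Finset.range (m + 1), Real.sin ((2 * r + 1) * x) / (2 * r + 1)

/-- Dirichlet-type kernel identity for odd sines. -/
lemma dirichlet_odd (x : ℝ) : ∀ n : ℕ,
    Real.sin x * ∑ r ∈ Finset.range n, Real.sin ((2 * r + 1) * x)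
      = Real.sin (n * x) ^ 2 := by
  intro n
  induction n with
  | zero => simp
  | succ n IH =>
    rw [Finset.sum_range_succ]
    push_cast
    have h1 : Real.cos (2 * ((n : ℝ) * x)) - Real.cos (2 * (((n : ℝ) + 1) * x))
        = 2 * Real.sin ((2 * (n : ℝ) + 1) * x) * Real.sin x := by
      rw [Real.cos_sub_cos,
        show (2 * ((n : ℝ) * x) + 2 * (((n : ℝ) + 1) * x)) / 2 = (2 * (n : ℝ) + 1) * x by ring,
        show (2 * ((n : ℝ) * x) - 2 * (((n : ℝ) + 1) * x)) / 2 = -x by ring,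
        Real.sin_neg]
      ring
    have c1 := Real.cos_two_mul ((n : ℝ) * x)
    have c2 := Real.cos_two_mul (((n : ℝ) + 1) * x)
    have s1 := Real.sin_sq ((n : ℝ) * x)
    have s2 := Real.sin_sq (((n : ℝ) + 1) * x)
    linear_combination IH - h1 / 2 + c1 / 2 - c2 / 2 + s1 - s2

/-- Abel summation bound. -/
lemma abel_general (f gg : ℕ → ℝ) (B : ℝ) (hf0 : ∀ i, 0 ≤ f i) (hfa : ∀ i, f (i + 1) ≤ f i)
    (hG0 : ∀ n, 0 ≤ ∑ i ∈ range n, gg i) (hGB : ∀ n, ∑ i ∈ range n, gg i ≤ B)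
    (R N : ℕ) (hRN : R < N) : |∑ i ∈ Ico R N, f i * gg i| ≤ f R * B := by
  have key := Finset.sum_Ico_by_parts f gg hRN
  simp only [smul_eq_mul] at key
  rw [key]
  set G : ℕ → ℝ := fun n => ∑ i ∈ range n, gg i with hGdef
  have hfmono : Antitone f := antitone_nat_of_succ_le hfa
  have hB : 0 ≤ B := le_trans (hG0 0) (hGB 0)
  have tele : ∑ i ∈ Ico R (N - 1), (f (i + 1) - f i) = f (N - 1) - f R := by
    rcases le_or_gt R (N - 1) with h | h
    · rw [Finset.sum_Ico_eq_sum_range]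
      have h2 := Finset.sum_range_sub (fun j => f (R + j)) (N - 1 - R)
      simp only [add_zero] at h2
      rw [Nat.add_sub_cancel' h] at h2
      exact h2
    · rw [Finset.Ico_eq_empty (by omega), Finset.sum_empty]
      have : N - 1 = R := by omega
      rw [this]; ring
  have hup : (f (N - 1) - f R) * B ≤ ∑ i ∈ Ico R (N - 1), (f (i + 1) - f i) * G (i + 1) := by
    calc (f (N - 1) - f R) * B = ∑ i ∈ Ico R (N - 1), (f (i + 1) - f i) * B := by
          rw [← Finset.sum_mul, tele]
      _ ≤ _ := by
          apply Finset.sum_le_sum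
          intro i _
          have h1 : f (i + 1) - f i ≤ 0 := by linarith [hfa i]
          nlinarith [hGB (i + 1)]
  have hdn : ∑ i ∈ Ico R (N - 1), (f (i + 1) - f i) * G (i + 1) ≤ 0 := by
    apply Finset.sum_nonpos
    intro i _
    have h1 : f (i + 1) - f i ≤ 0 := by linarith [hfa i]
    nlinarith [hG0 (i + 1)]
  have p1 : f (N - 1) * G N ≤ f (N - 1) * B := mul_le_mul_of_nonneg_left (hGB N) (hf0 (N - 1))
  have p2 : 0 ≤ f (N - 1) * G N := mul_nonneg (hf0 (N - 1)) (hG0 N)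
  have p3 : 0 ≤ f R * G R := mul_nonneg (hf0 R) (hG0 R)
  have p4 : f R * G R ≤ f R * B := mul_le_mul_of_nonneg_left (hGB R) (hf0 R)
  have p5 : f (N - 1) ≤ f R := hfmono (by omega)
  have p6 : f (N - 1) * B ≤ f R * B := mul_le_mul_of_nonneg_right p5 hB
  rw [abs_le]
  constructor <;> nlinarith [hup, hdn, p1, p2, p3, p4, p6]

/-- The key elementary inequality. -/
lemma keyineq (x t : ℝ) (hx0 : 0 < x) (hx1 : x ≤ 0.786) (h1 : 143/200 - x ≤ t)
    (h2 : x ≤ t) (h3 : (t - x) * (t - 143/200) ≤ 0) :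
    1 ≤ (1.49 - t) * ((2*t + x) * (1 - x^2/4)) := by
  rcases le_total t (143/200 : ℝ) with hta | hta
  · nlinarith [mul_nonneg (sub_nonneg.2 h2) (sub_nonneg.2 hta), sq_nonneg (x - 0.786),
      mul_nonneg (sub_nonneg.2 h2) (sub_nonneg.2 h1),
      mul_nonneg (sub_nonneg.2 hta) (sub_nonneg.2 h1),
      mul_nonneg (mul_nonneg (sub_nonneg.2 h2) (sub_nonneg.2 hta)) (le_of_lt hx0),
      mul_nonneg (mul_nonneg (sub_nonneg.2 h2) (sub_nonneg.2 hta)) (sub_nonneg.2 hx1),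
      mul_nonneg (mul_nonneg (sub_nonneg.2 hta) (sub_nonneg.2 h1)) (le_of_lt hx0),
      mul_nonneg (mul_nonneg (sub_nonneg.2 hta) (sub_nonneg.2 h1)) (sub_nonneg.2 hx1),
      sq_nonneg x, sq_nonneg t, mul_pos hx0 hx0]
  · have h0 : 0 ≤ (t - x) * (t - 143/200) := mul_nonneg (by linarith) (by linarith)
    have hz : (t - x) * (t - 143/200) = 0 := le_antisymm h3 h0
    rcases mul_eq_zero.1 hz with h | h
    · have ht : t = x := by linarith
      subst ht
      nlinarith [sq_nonneg (t - 0.5), mul_nonneg (mul_nonneg hx0.le hx0.le) (sub_nonneg.2 hx1),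
        mul_nonneg (sub_nonneg.2 hx1) (by linarith : (0:ℝ) ≤ 2*t - 143/200),
        mul_nonneg (mul_nonneg (sub_nonneg.2 hx1) (by linarith : (0:ℝ) ≤ 2*t - 143/200)) hx0.le]
    · have ht : t = 143/200 := by linarith
      subst ht
      nlinarith [sq_nonneg (x - 0.786), mul_nonneg (mul_nonneg hx0.le hx0.le) (sub_nonneg.2 hx1)]

set_option maxHeartbeats 1000000 in
lemma main_nonneg (m : ℕ) (hm : 12 < m) (x : ℝ) (hx0 : 0 ≤ x) (hx : x ≤ Real.pi / 4) :
    |g m x| ≤ 1.9 := by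
  have pi_gt := Real.pi_gt_d6
  have pi_lt := Real.pi_lt_d6
  have hxu : x ≤ 0.786 := by linarith
  suffices hT : |∑ r ∈ Finset.range (m + 1), Real.sin ((2 * r + 1) * x) / (2 * r + 1)| ≤ 1.49 by
    have hpi : (0:ℝ) < Real.pi := Real.pi_pos
    simp only [g]
    rw [abs_mul, abs_of_pos (by positivity : (0:ℝ) < 4 / Real.pi)]
    rw [div_mul_eq_mul_div, div_le_iff₀ hpi]
    nlinarith [hT, abs_nonneg (∑ r ∈ Finset.range (m + 1),
      Real.sin ((2 * r + 1) * x) / (2 * r + 1))]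
  rcases eq_or_lt_of_le hx0 with rfl | hx0'
  · simp
    norm_num
  have hsx : 0 < Real.sin x := Real.sin_pos_of_pos_of_lt_pi hx0' (by linarith)
  have hS0 : ∀ n : ℕ, 0 ≤ ∑ r ∈ Finset.range n, Real.sin ((2 * r + 1) * x) := by
    intro n
    have hd := dirichlet_odd x n
    nlinarith [sq_nonneg (Real.sin ((n : ℝ) * x))]
  have hSB : ∀ n : ℕ, ∑ r ∈ Finset.range n, Real.sin ((2 * r + 1) * x) ≤ 1 / Real.sin x := by
    intro n
    rw [le_div_iff₀ hsx]
    have hd := dirichlet_odd x n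
    have := Real.sin_sq_le_one ((n : ℝ) * x)
    nlinarith
  set R : ℕ := max 1 ⌊(143/200 : ℝ) / x⌋₊ with hR
  have hR1 : 1 ≤ R := le_max_left _ _
  set t : ℝ := (R : ℝ) * x with ht
  have hR1' : (1:ℝ) ≤ (R:ℝ) := by exact_mod_cast hR1
  have h2 : x ≤ t := by rw [ht]; nlinarith
  have hfl : ⌊(143/200 : ℝ) / x⌋₊ ≤ R := le_max_right _ _
  have h1 : 143/200 - x ≤ t := by
    have hlt := Nat.lt_floor_add_one ((143/200 : ℝ) / x)
    have hfx : (143/200 : ℝ) < ((⌊(143/200 : ℝ) / x⌋₊ : ℝ) + 1) * x := by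
      rw [← div_lt_iff₀ hx0']
      exact hlt
    have hle : ((⌊(143/200 : ℝ) / x⌋₊ : ℝ) + 1) * x ≤ ((R : ℝ) + 1) * x := by
      have : (⌊(143/200 : ℝ) / x⌋₊ : ℝ) ≤ (R : ℝ) := by exact_mod_cast hfl
      nlinarith
    rw [ht]; nlinarith
  have h3 : (t - x) * (t - 143/200) ≤ 0 := by
    rcases le_or_gt x (143/200 : ℝ) with hxa | hxa
    · have hfl1 : 1 ≤ ⌊(143/200 : ℝ) / x⌋₊ := by
        apply Nat.le_floor
        rw [Nat.cast_one, le_div_iff₀ hx0']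
        linarith
      have hRe : R = ⌊(143/200 : ℝ) / x⌋₊ := max_eq_right hfl1
      have htle : t ≤ 143/200 := by
        rw [ht, hRe]
        have hfle := Nat.floor_le (by positivity : (0:ℝ) ≤ (143/200 : ℝ) / x)
        calc (⌊(143/200 : ℝ) / x⌋₊ : ℝ) * x ≤ ((143/200 : ℝ) / x) * x :=
              mul_le_mul_of_nonneg_right hfle hx0'.le
          _ = 143/200 := div_mul_cancel₀ _ (ne_of_gt hx0')
      nlinarith [mul_nonneg (sub_nonneg.2 h2) (sub_nonneg.2 htle)]
    · have hfl0 : ⌊(143/200 : ℝ) / x⌋₊ = 0 := by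
        rw [Nat.floor_eq_zero]
        rw [div_lt_one hx0']
        linarith
      have hRe : R = 1 := by rw [hR, hfl0]; simp
      have hte : t = x := by rw [ht, hRe]; push_cast; ring
      rw [hte]
      simp
  have h6 : t ≤ 0.786 := by
    by_contra hc
    push_neg at hc
    nlinarith [mul_pos (show (0:ℝ) < t - x by linarith) (show (0:ℝ) < t - 143/200 by linarith)]
  have head : ∀ n : ℕ, |∑ r ∈ Finset.range n, Real.sin ((2 * r + 1) * x) / (2 * r + 1)|
      ≤ (n : ℝ) * x := by
    intro n
    refine (Finset.abs_sum_le_sum_abs _ _).trans ?_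
    have hb : ∀ r ∈ Finset.range n, |Real.sin ((2 * r + 1) * x) / (2 * r + 1)| ≤ x := by
      intro r _
      have hp : (0:ℝ) < 2 * (r : ℝ) + 1 := by positivity
      rw [abs_div, abs_of_pos hp, div_le_iff₀ hp]
      calc |Real.sin ((2 * r + 1) * x)| ≤ |(2 * (r : ℝ) + 1) * x| := Real.abs_sin_le_abs
        _ = (2 * (r : ℝ) + 1) * x := abs_of_nonneg (mul_nonneg (by positivity) hx0'.le)
        _ = x * (2 * (r : ℝ) + 1) := by ring
    refine (Finset.sum_le_sum hb).trans ?_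
    rw [Finset.sum_const, Finset.card_range, nsmul_eq_mul]
  rcases le_or_gt (m + 1) R with hcase | hcase
  · refine (head (m + 1)).trans ?_
    have hmc : ((m : ℝ) + 1) ≤ (R : ℝ) := by exact_mod_cast hcase
    have : ((m : ℝ) + 1) * x ≤ t := by rw [ht]; nlinarith
    push_cast
    linarith
  · have hsplit : ∑ r ∈ Finset.range (m + 1), Real.sin ((2 * r + 1) * x) / (2 * r + 1)
        = (∑ r ∈ Finset.range R, Real.sin ((2 * r + 1) * x) / (2 * r + 1))
          + ∑ r ∈ Finset.Ico R (m + 1), Real.sin ((2 * r + 1) * x) / (2 * r + 1) :=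
      (Finset.sum_range_add_sum_Ico _ hcase.le).symm
    have habel := abel_general (fun i => 1 / (2 * (i : ℝ) + 1))
      (fun i => Real.sin ((2 * (i : ℝ) + 1) * x)) (1 / Real.sin x)
      (fun i => by positivity)
      (fun i => by
        push_cast
        apply one_div_le_one_div_of_le
        · positivity
        · linarith)
      hS0 hSB R (m + 1) hcase
    simp only [one_div_mul_eq_div] at habel
    have hhead := head R
    have hsin : x - x ^ 3 / 4 < Real.sin x := by
      have := Real.sin_gt_sub_cube hx0'; nlinarith [pow_pos hx0' 3]
    have hu : (2 * t + x) * (1 - x^2/4) ≤ (2 * (R : ℝ) + 1) * Real.sin x := by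
      have e : 2 * t + x = (2 * (R : ℝ) + 1) * x := by rw [ht]; ring
      rw [e]
      calc (2 * (R : ℝ) + 1) * x * (1 - x^2/4) = (2 * (R : ℝ) + 1) * (x - x^3/4) := by ring
        _ ≤ (2 * (R : ℝ) + 1) * Real.sin x :=
            mul_le_mul_of_nonneg_left hsin.le (by positivity)
    have hupos : (0:ℝ) < (2 * t + x) * (1 - x^2/4) := by nlinarith
    have hkey := keyineq x t hx0' hxu h1 h2 h3
    have hq : 1 / Real.sin x / (2 * (R : ℝ) + 1) ≤ 1.49 - t := by
      rw [div_div]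
      have h7 : (0:ℝ) < Real.sin x * (2 * (R : ℝ) + 1) := by positivity
      rw [div_le_iff₀ h7]
      calc (1:ℝ) ≤ (1.49 - t) * ((2 * t + x) * (1 - x^2/4)) := hkey
        _ ≤ (1.49 - t) * ((2 * (R : ℝ) + 1) * Real.sin x) :=
            mul_le_mul_of_nonneg_left hu (by norm_num; linarith)
        _ = (1.49 - t) * (Real.sin x * (2 * (R : ℝ) + 1)) := by ring
    calc |∑ r ∈ Finset.range (m + 1), Real.sin ((2 * r + 1) * x) / (2 * r + 1)|
        ≤ |∑ r ∈ Finset.range R, Real.sin ((2 * r + 1) * x) / (2 * r + 1)|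
          + |∑ r ∈ Finset.Ico R (m + 1), Real.sin ((2 * r + 1) * x) / (2 * r + 1)| := by
          rw [hsplit]; exact abs_add_le _ _
      _ ≤ (R : ℝ) * x + 1 / Real.sin x / (2 * (R : ℝ) + 1) := add_le_add hhead habel
      _ ≤ 1.49 := by rw [← ht] at *; linarith

theorem fourier_sign_bounded_near_zero (m : ℕ) (hm : 12 < m) (x : ℝ)
    (hx : |x| ≤ Real.pi / 4) : |g m x| ≤ 1.9 := by
  rcases le_or_gt 0 x with h | h
  · exact main_nonneg m hm x h (le_trans (le_abs_self x) hx)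
  · have hgo : g m x = -g m (-x) := by
      simp only [g]
      simp only [mul_neg, Real.sin_neg, neg_div, Finset.sum_neg_distrib, mul_neg, neg_neg]
    rw [hgo, abs_neg]
    exact main_nonneg m hm (-x) (by linarith) (le_trans (neg_le_abs x) hx)
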